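/- arXiv:2012.13070 — 2 statements merged into one kernel-verified Lean document; each statement's English description precedes it below -/
import Mathlib

section
/- Let Γ be a graph, ε an end of Γ, and let R, S, T be ε-rays with pairwise disjoint tails. If S separates R from T, then T does not separate R from S, and R does not separate S from T. -/
set_option autoImplicit false

namespace Ubiquity

variable {V W T : Type}

/-- A ray (one-way infinite path) in a graph `G`. -/
structure Ray (G : SimpleGraph V) where
  f : ℕ → V
  inj : Function.Injective f
  adj : ∀ n : ℕ, G.Adj (f n) (f (n + 1))

/-- The vertex set of a ray. -/
def Ray.verts {G : SimpleGraph V} (R : Ray G) : Set V := Set.range R.f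

/-- The tail of a ray from its `k`-th vertex on. -/
def Ray.tail {G : SimpleGraph V} (R : Ray G) (k : ℕ) : Ray G where
  f := fun n => R.f (n + k)
  inj := fun a b h => by have := R.inj h; omega
  adj := fun n => by
    show G.Adj (R.f (n + k)) (R.f (n + 1 + k))
    have h : n + 1 + k = n + k + 1 := by omega
    rw [h]
    exact R.adj (n + k)

/-- `R'` is a tail of the ray `R`. -/
def Ray.IsTailOf {G : SimpleGraph V} (R' R : Ray G) : Prop :=
  ∃ k : ℕ, ∀ n : ℕ, R'.f n = R.f (n + k)

/-- A path in `G` from a vertex of `A` to a vertex of `B`. -/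
structure PathBetween (G : SimpleGraph V) (A B : Set V) where
  first : V
  last : V
  walk : G.Walk first last
  isPath : walk.IsPath
  first_mem : first ∈ A
  last_mem : last ∈ B

/-- The vertex set of such a path. -/
def PathBetween.verts {G : SimpleGraph V} {A B : Set V} (P : PathBetween G A B) : Set V :=
  {v | v ∈ P.walk.support}

/-- Two rays are equivalent in `G − X`: there are infinitely many pairwise
vertex-disjoint paths between them, all avoiding `X`. -/
def RayEquivAvoiding (G : SimpleGraph V) (X : Set V) (R S : Ray G) : Prop :=
  ∃ P : ℕ → PathBetween G R.verts S.verts,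
    (∀ n : ℕ, ∀ v ∈ (P n).verts, v ∉ X) ∧
    ∀ m n : ℕ, m ≠ n → Disjoint (P m).verts (P n).verts

/-- Two rays are equivalent: there are infinitely many pairwise vertex-disjoint
paths between them. -/
def RayEquiv (G : SimpleGraph V) (R S : Ray G) : Prop := RayEquivAvoiding G ∅ R S

/-- `ε` is an end of `G`: an equivalence class of rays. -/
def IsEnd (G : SimpleGraph V) (ε : Set (Ray G)) : Prop :=
  ε.Nonempty ∧ ∀ R ∈ ε, ∀ S : Ray G, S ∈ ε ↔ RayEquiv G R S

/-- An end of `G − X`, viewed as an equivalence class of rays of `G` avoiding `X`. -/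
def IsEndAvoiding (G : SimpleGraph V) (X : Set V) (δ : Set (Ray G)) : Prop :=
  δ.Nonempty ∧ (∀ R ∈ δ, Disjoint R.verts X) ∧
    ∀ R ∈ δ, ∀ S : Ray G, Disjoint S.verts X → (S ∈ δ ↔ RayEquivAvoiding G X R S)

/-- A family of pairwise disjoint rays, all belonging to `ε`. -/
def DisjointRayFamily {I : Type} (G : SimpleGraph V) (ε : Set (Ray G)) (R : I → Ray G) : Prop :=
  (∀ i, R i ∈ ε) ∧ ∀ i j : I, i ≠ j → Disjoint (R i).verts (R j).verts

/-- The end `ε` has finite degree (is thin): for some `k` there is no family of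
`k+1` pairwise disjoint `ε`-rays. -/
def ThinEnd (G : SimpleGraph V) (ε : Set (Ray G)) : Prop :=
  ∃ k : ℕ, ∀ R : Fin (k + 1) → Ray G, (∀ i, R i ∈ ε) →
    ¬ ∀ i j, i ≠ j → Disjoint (R i).verts (R j).verts

/-- The end `ε` is thick: it contains arbitrarily many disjoint rays. -/
def ThickEnd (G : SimpleGraph V) (ε : Set (Ray G)) : Prop :=
  ∀ n : ℕ, ∃ R : Fin n → Ray G, DisjointRayFamily G ε R

/-- `G` is locally finite. -/
def LocFin (G : SimpleGraph V) : Prop := ∀ v : V, (G.neighborSet v).Finite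

/-- An inflated copy of `G` inside `Γ`: a subgraph `H` of `Γ` with a map `φ`
whose branch sets are nonempty and connected, such that there is an edge of `H`
between the branch sets of `v` and `w` iff `vw ∈ E(G)`, this edge being unique. -/
structure InflatedCopy (G : SimpleGraph V) (Γ : SimpleGraph W) where
  H : Γ.Subgraph
  φ : W → V
  branch_nonempty : ∀ v : V, ∃ w ∈ H.verts, φ w = v
  branch_connected : ∀ v : V, (H.induce {w ∈ H.verts | φ w = v}).Connected
  adj_of_edge : ∀ ⦃a b : W⦄, H.Adj a b → φ a ≠ φ b → G.Adj (φ a) (φ b)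
  edge_of_adj : ∀ ⦃v w : V⦄, G.Adj v w → ∃ a b : W, H.Adj a b ∧ φ a = v ∧ φ b = w
  edge_unique : ∀ ⦃v w : V⦄, G.Adj v w → ∀ a b a' b' : W, H.Adj a b → H.Adj a' b' →
    φ a = v → φ b = w → φ a' = v → φ b' = w → a = a' ∧ b = b'

/-- The branch set of `v` in an inflated copy. -/
def InflatedCopy.branch {G : SimpleGraph V} {Γ : SimpleGraph W} (Hc : InflatedCopy G Γ)
    (v : V) : Set W := {w ∈ Hc.H.verts | Hc.φ w = v}

/-- A tidy inflated copy: each branch set induces a tree, finite whenever the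
corresponding vertex has finite degree. -/
def InflatedCopy.Tidy {G : SimpleGraph V} {Γ : SimpleGraph W} (Hc : InflatedCopy G Γ) : Prop :=
  ∀ v : V, (Hc.H.induce (Hc.branch v)).coe.IsTree ∧
    ((G.neighborSet v).Finite → (Hc.branch v).Finite)

/-- `G` is a minor of `Γ`. -/
def IsMinor (G : SimpleGraph V) (Γ : SimpleGraph W) : Prop := Nonempty (InflatedCopy G Γ)

/-- The disjoint union of `ι` many copies of `G`. -/
def copies (ι : Type) (G : SimpleGraph V) : SimpleGraph (ι × V) where
  Adj a b := a.1 = b.1 ∧ G.Adj a.2 b.2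
  symm := ⟨fun _ _ h => ⟨h.1.symm, h.2.symm⟩⟩
  loopless := ⟨fun a h => G.loopless.irrefl a.2 h.2⟩

/-- `a` and `b` are joined by a walk of `K` avoiding the set `X`. -/
def ReachAvoid {α : Type} (K : SimpleGraph α) (X : Set α) (a b : α) : Prop :=
  ∃ w : K.Walk a b, ∀ x ∈ w.support, x ∉ X


/-! ### Linkages and transition functions -/

/-- A linkage from the family `R` to the family `S` of disjoint rays: a family
of disjoint paths `path i` from a vertex of `R i` to a vertex of `S (σ i)` such
that the concatenated rays form a family of disjoint rays. -/
structure Linkage (Γ : SimpleGraph W) {I J : Type} (R : I → Ray Γ) (S : J → Ray Γ) where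
  σ : I → J
  inj : Function.Injective σ
  exit : I → ℕ
  entry : I → ℕ
  path : ∀ i : I, Γ.Walk ((R i).f (exit i)) ((S (σ i)).f (entry i))
  isPath : ∀ i : I, (path i).IsPath
  meet_init : ∀ i : I, ∀ v ∈ (path i).support,
    (∃ k ≤ exit i, (R i).f k = v) → v = (R i).f (exit i)
  meet_tail : ∀ i : I, ∀ v ∈ (path i).support,
    (∃ k : ℕ, entry i ≤ k ∧ (S (σ i)).f k = v) → v = (S (σ i)).f (entry i)
  init_tail : ∀ i : I, ∀ k ≤ exit i, ∀ k' : ℕ, entry i ≤ k' →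
    (R i).f k = (S (σ i)).f k' → k = exit i ∧ k' = entry i
  disj : ∀ i j : I, i ≠ j → ∀ v : W,
    ((∃ k ≤ exit i, (R i).f k = v) ∨ v ∈ (path i).support ∨
      ∃ k : ℕ, entry i ≤ k ∧ (S (σ i)).f k = v) →
    ((∃ k ≤ exit j, (R j).f k = v) ∨ v ∈ (path j).support ∨
      ∃ k : ℕ, entry j ≤ k ∧ (S (σ j)).f k = v) → False

/-- The vertex set of the `i`-th concatenated ray of a linkage. -/
def Linkage.rverts {Γ : SimpleGraph W} {I J : Type} {R : I → Ray Γ} {S : J → Ray Γ}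
    (L : Linkage Γ R S) (i : I) : Set W :=
  {v | (∃ k ≤ L.exit i, (R i).f k = v) ∨ v ∈ (L.path i).support ∨
    ∃ k : ℕ, L.entry i ≤ k ∧ (S (L.σ i)).f k = v}

/-- A linkage is after `X` if `X` meets each concatenated ray only within the
initial segment of the corresponding ray of `R`. -/
def Linkage.After {Γ : SimpleGraph W} {I J : Type} {R : I → Ray Γ} {S : J → Ray Γ}
    (L : Linkage Γ R S) (X : Set W) : Prop :=
  ∀ i : I, ∀ v ∈ X, v ∈ L.rverts i → ∃ k ≤ L.exit i, (R i).f k = v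

/-- `σ` is a transition function from `R` to `S`: for every finite vertex set `X`
there is a linkage from `R` to `S` after `X` inducing `σ`. -/
def IsTransitionFunction (Γ : SimpleGraph W) {I J : Type} (R : I → Ray Γ) (S : J → Ray Γ)
    (σ : I → J) : Prop :=
  ∀ X : Set W, X.Finite → ∃ L : Linkage Γ R S, L.σ = σ ∧ L.After X

/-- A linkage is transitional if the function it induces is a transition function. -/
def Linkage.Transitional {Γ : SimpleGraph W} {I J : Type} {R : I → Ray Γ} {S : J → Ray Γ}
    (L : Linkage Γ R S) : Prop := IsTransitionFunction Γ R S L.σ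

/-! ### Ray graphs and separation -/

/-- There are infinitely many disjoint paths from `R i` to `R j` meeting no other `R k`. -/
def LinkedRays (Γ : SimpleGraph W) {I : Type} (R : I → Ray Γ) (i j : I) : Prop :=
  ∃ P : ℕ → PathBetween Γ (R i).verts (R j).verts,
    (∀ m n : ℕ, m ≠ n → Disjoint (P m).verts (P n).verts) ∧
    ∀ n : ℕ, ∀ k : I, k ≠ i → k ≠ j → Disjoint (P n).verts (R k).verts

/-- The ray graph of a family of disjoint rays. -/
def rayGraph (Γ : SimpleGraph W) {I : Type} (R : I → Ray Γ) : SimpleGraph I where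
  Adj i j := i ≠ j ∧ (LinkedRays Γ R i j ∨ LinkedRays Γ R j i)
  symm := ⟨fun _ _ h => ⟨h.1.symm, h.2.symm⟩⟩
  loopless := ⟨fun _ h => h.1 rfl⟩

/-- `S` separates `R` from `T'`: the tails of `R` and `T'` disjoint from `S`
belong to different ends of `Γ − V(S)`. -/
def SeparatesRay (Γ : SimpleGraph W) (S R T' : Ray Γ) : Prop :=
  ∀ R' T'' : Ray Γ, R'.IsTailOf R → T''.IsTailOf T' →
    Disjoint R'.verts S.verts → Disjoint T''.verts S.verts →
    ¬ RayEquivAvoiding Γ S.verts R' T''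

/-- `K − c` has precisely two connected components, each of size at least `m`. -/
def TwoCompsAtLeast {I : Type} (K : SimpleGraph I) (c : I) (m : ℕ) : Prop :=
  ∃ A B : Set I, A.Nonempty ∧ B.Nonempty ∧ Disjoint A B ∧ A ∪ B = {i | i ≠ c} ∧
    (∀ a ∈ A, ∀ b ∈ A, ReachAvoid K {c} a b) ∧
    (∀ a ∈ B, ∀ b ∈ B, ReachAvoid K {c} a b) ∧
    (∀ a ∈ A, ∀ b ∈ B, ¬ ReachAvoid K {c} a b) ∧
    (m : ℕ∞) ≤ A.encard ∧ (m : ℕ∞) ≤ B.encard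

/-- `i` is an inner vertex of the (nodup) list `L`. -/
def IsInnerListVertex {n : ℕ} (L : List (Fin n)) (i : Fin n) : Prop :=
  i ∈ L ∧ 0 < L.idxOf i ∧ L.idxOf i + 1 < L.length

/-- The end `ε` splits in `Γ − X` into the two ends `δ` and `δ'`. -/
def SplitsInto (Γ : SimpleGraph W) (ε : Set (Ray Γ)) (X : Set W) (δ δ' : Set (Ray Γ)) : Prop :=
  IsEndAvoiding Γ X δ ∧ IsEndAvoiding Γ X δ' ∧ δ ≠ δ' ∧
    ∀ S ∈ ε, Disjoint (Ray.verts S) X → S ∈ δ ∪ δ'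

/-- `δ` is a sub-end of `δ'`: every ray of `δ` has a tail in `δ'`. -/
def SubEnd (Γ : SimpleGraph W) (δ δ' : Set (Ray Γ)) : Prop :=
  ∀ R ∈ δ, ∃ R' : Ray Γ, R'.IsTailOf R ∧ R' ∈ δ'

/-! ### Half-grid-like ends -/

/-- A witness that the thick end `ε` of `Γ` is half-grid-like: there is `N ∈ ℕ`
and a choice of (correctly oriented) central path for each family of disjoint
`ε`-rays such that: for families of size at least `N + 2` the central path is a
bare path of the ray graph containing all but at most `N` of its vertices, every
vertex whose deletion leaves precisely two components of size at least `N + 1`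
is an inner vertex of the central path, and every transition function between
families of at least `N + 3` disjoint `ε`-rays maps central path vertices to
central path vertices preserving the correct orientation. -/
structure HalfGridLike (Γ : SimpleGraph W) (ε : Set (Ray Γ)) where
  isEnd : IsEnd Γ ε
  thick : ThickEnd Γ ε
  N : ℕ
  central : ∀ {n : ℕ}, (Fin n → Ray Γ) → List (Fin n)
  central_nodup : ∀ {n : ℕ} (R : Fin n → Ray Γ), DisjointRayFamily Γ ε R → N + 2 ≤ n →
    (central R).Nodup
  central_chain : ∀ {n : ℕ} (R : Fin n → Ray Γ), DisjointRayFamily Γ ε R → N + 2 ≤ n →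
    (central R).Chain' (rayGraph Γ R).Adj
  central_large : ∀ {n : ℕ} (R : Fin n → Ray Γ), DisjointRayFamily Γ ε R → N + 2 ≤ n →
    n ≤ (central R).length + N
  central_bare : ∀ {n : ℕ} (R : Fin n → Ray Γ), DisjointRayFamily Γ ε R → N + 2 ≤ n →
    ∀ i : Fin n, IsInnerListVertex (central R) i → ((rayGraph Γ R).neighborSet i).encard = 2
  central_inner : ∀ {n : ℕ} (R : Fin n → Ray Γ), DisjointRayFamily Γ ε R → N + 2 ≤ n →
    ∀ c : Fin n, TwoCompsAtLeast (rayGraph Γ R) c (N + 1) → IsInnerListVertex (central R) c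
  central_map : ∀ {n m : ℕ} (R : Fin n → Ray Γ) (S : Fin m → Ray Γ),
    DisjointRayFamily Γ ε R → DisjointRayFamily Γ ε S → N + 3 ≤ n → N + 3 ≤ m →
    ∀ σ : Fin n → Fin m, IsTransitionFunction Γ R S σ →
    ∀ i ∈ central R, σ i ∈ central S
  central_order : ∀ {n m : ℕ} (R : Fin n → Ray Γ) (S : Fin m → Ray Γ),
    DisjointRayFamily Γ ε R → DisjointRayFamily Γ ε S → N + 3 ≤ n → N + 3 ≤ m →
    ∀ σ : Fin n → Fin m, IsTransitionFunction Γ R S σ →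
    ∀ i ∈ central R, ∀ j ∈ central R, (central R).idxOf i < (central R).idxOf j →
      (central S).idxOf (σ i) < (central S).idxOf (σ j)

/-- A core ray of the half-grid-like end `ε`. -/
def IsCoreRay {Γ : SimpleGraph W} {ε : Set (Ray Γ)} (hg : HalfGridLike Γ ε) (R : Ray Γ) : Prop :=
  R ∈ ε ∧ ∃ (n : ℕ) (F : Fin n → Ray Γ) (c : Fin n),
    DisjointRayFamily Γ ε F ∧ F c = R ∧ TwoCompsAtLeast (rayGraph Γ F) c (hg.N + 1)

/-- `(δ, δ')` is the pair of ends `(⊤(F c, F), ⊥(F c, F))` of `Γ − V(F c)`. -/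
def IsTopBotPair {Γ : SimpleGraph W} {ε : Set (Ray Γ)} (hg : HalfGridLike Γ ε)
    {n : ℕ} (F : Fin n → Ray Γ) (c : Fin n) (δ δ' : Set (Ray Γ)) : Prop :=
  IsEndAvoiding Γ (F c).verts δ ∧ IsEndAvoiding Γ (F c).verts δ' ∧ δ ≠ δ' ∧
  (∀ S ∈ ε, Disjoint (Ray.verts S) (F c).verts → S ∈ δ ∪ δ') ∧
  (∀ i : Fin n, i ∈ hg.central F →
    (hg.central F).idxOf i < (hg.central F).idxOf c → F i ∈ δ) ∧
  ∀ i : Fin n, i ∈ hg.central F →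
    (hg.central F).idxOf c < (hg.central F).idxOf i → F i ∈ δ'

/-- `R ∈ ⊤(ε, S)`: for some family witnessing `S` on a central path, `R` lies in
the top end of `Γ − V(S)`. -/
def InTop {Γ : SimpleGraph W} {ε : Set (Ray Γ)} (hg : HalfGridLike Γ ε) (S R : Ray Γ) : Prop :=
  ∃ (n : ℕ) (F : Fin n → Ray Γ) (c : Fin n) (δ δ' : Set (Ray Γ)),
    DisjointRayFamily Γ ε F ∧ hg.N + 2 ≤ n ∧ F c = S ∧ c ∈ hg.central F ∧
    IsTopBotPair hg F c δ δ' ∧ R ∈ δ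

/-- The relation `≤_ε` on core rays. -/
def coreLE {Γ : SimpleGraph W} {ε : Set (Ray Γ)} (hg : HalfGridLike Γ ε) (R S : Ray Γ) : Prop :=
  R = S ∨ ∃ a b : ℕ, Disjoint (R.tail a).verts (S.tail b).verts ∧
    InTop hg (S.tail b) (R.tail a)

/-- `R̄` (with inclusion `ι`) is an extension of the family `R` of core rays as in
Lemma 5.19: every ray of `R` disconnects the ray graph of `R̄` into exactly two
components of size at least `N + 1` and is an inner vertex of the central path,
and `|R̄| = |R| + 2N + 2`. -/
def IsBarExtension {Γ : SimpleGraph W} {ε : Set (Ray Γ)} (hg : HalfGridLike Γ ε)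
    {k : ℕ} (R : Fin k → Ray Γ) (Rbar : Fin (k + (2 * hg.N + 2)) → Ray Γ)
    (ι : Fin k ↪ Fin (k + (2 * hg.N + 2))) : Prop :=
  DisjointRayFamily Γ ε Rbar ∧ (∀ i, Rbar (ι i) = R i) ∧
  (∀ i : Fin k, TwoCompsAtLeast (rayGraph Γ Rbar) (ι i) (hg.N + 1)) ∧
  ∀ i : Fin k, IsInnerListVertex (hg.central Rbar) (ι i)

/-- A linkage is preserving on the subfamily `R` (included via `ι`): it links the
rays of `R` to core rays and preserves the order `≤_ε`. -/
def PreservingOn {Γ : SimpleGraph W} {ε : Set (Ray Γ)} (hg : HalfGridLike Γ ε)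
    {k p m : ℕ} (R : Fin k → Ray Γ) (ι : Fin k ↪ Fin p)
    {Rbar : Fin p → Ray Γ} {S : Fin m → Ray Γ} (L : Linkage Γ Rbar S) : Prop :=
  (∀ i : Fin k, IsCoreRay hg (S (L.σ (ι i)))) ∧
  ∀ i j : Fin k, coreLE hg (R i) (R j) → coreLE hg (S (L.σ (ι i))) (S (L.σ (ι j)))


/-! ### Tree-decompositions -/

/-- A tree-decomposition of `G` with decomposition tree on the vertex type `T`. -/
structure TreeDecomp (G : SimpleGraph V) (T : Type) where
  tree : SimpleGraph T
  isTree : tree.IsTree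
  part : T → Set V
  cover : ∀ v : V, ∃ t : T, v ∈ part t
  edge_cover : ∀ ⦃u v : V⦄, G.Adj u v → ∃ t : T, u ∈ part t ∧ v ∈ part t
  interpolate : ∀ ⦃t₁ t₂ t₃ : T⦄ (p : tree.Walk t₁ t₃), p.IsPath → t₂ ∈ p.support →
    part t₁ ∩ part t₃ ⊆ part t₂

/-- A rooted tree-decomposition. -/
structure RootedTreeDecomp (G : SimpleGraph V) (T : Type) extends TreeDecomp G T where
  root : T

/-- An edge of the decomposition tree, oriented away from the root: `tgt` is the
endvertex farther from the root. -/
structure RootedTreeDecomp.Edge {G : SimpleGraph V} {T : Type} (D : RootedTreeDecomp G T) where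
  src : T
  tgt : T
  adj : D.tree.Adj src tgt
  away : D.tree.dist D.root tgt = D.tree.dist D.root src + 1

/-- The vertex set of the component `T_{e⁺}` of `T − e` containing `e.tgt`. -/
def RootedTreeDecomp.above {G : SimpleGraph V} {T : Type} (D : RootedTreeDecomp G T)
    (e : D.Edge) : Set T :=
  {t | ∃ w : D.tree.Walk t e.tgt, e.src ∉ w.support}

/-- The bough `B(e)`: the union of the parts indexed by `T_{e⁺}`. -/
def RootedTreeDecomp.bough {G : SimpleGraph V} {T : Type} (D : RootedTreeDecomp G T)
    (e : D.Edge) : Set V :=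
  {v | ∃ t ∈ D.above e, v ∈ D.part t}

/-- The set `A(e)`: the union of the parts indexed outside `T_{e⁺}`. -/
def RootedTreeDecomp.sideA {G : SimpleGraph V} {T : Type} (D : RootedTreeDecomp G T)
    (e : D.Edge) : Set V :=
  {v | ∃ t : T, t ∉ D.above e ∧ v ∈ D.part t}

/-- The separator `S(e) = V_{e⁻} ∩ V_{e⁺}`. -/
def RootedTreeDecomp.sep {G : SimpleGraph V} {T : Type} (D : RootedTreeDecomp G T)
    (e : D.Edge) : Set V :=
  D.part e.src ∩ D.part e.tgt

/-- The graph `Ḡ[B(e)]`: the induced graph on `B(e)` with all edges between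
vertices of `S(e)` deleted. -/
def RootedTreeDecomp.barB {G : SimpleGraph V} {T : Type} (D : RootedTreeDecomp G T)
    (e : D.Edge) : SimpleGraph (D.bough e) where
  Adj a b := G.Adj ↑a ↑b ∧ ¬((↑a : V) ∈ D.sep e ∧ (↑b : V) ∈ D.sep e)
  symm := ⟨fun _ _ h => ⟨h.1.symm, fun hc => h.2 ⟨hc.2, hc.1⟩⟩⟩
  loopless := ⟨fun a h => G.loopless.irrefl ↑a h.1⟩

/-- A witness for the self-similarity of the bough `B(e)` along the family of
rays `Rfam`, of distance at least `n`: an edge `e'` of `T_{e⁺}` at distance at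
least `n`, together with an inflated copy `Wcopy` of `Ḡ[B(e)]` inside `G[B(e')]`
such that each ray `Rfam s` (for `s ∈ S(e)`) meets `S(e')` only inside the
branch set of `s`. -/
structure SelfSimilarityWitness {G : SimpleGraph V} {T : Type} (D : RootedTreeDecomp G T)
    (e : D.Edge) (Rfam : V → Ray G) (n : ℕ) where
  e' : D.Edge
  habove : e'.src ∈ D.above e
  hfar : n ≤ D.tree.dist e.src e'.src
  Wcopy : InflatedCopy (D.barB e) G
  hsub : Wcopy.H.verts ⊆ D.bough e'
  hmeets : ∀ s ∈ D.sep e, ∃ k : ℕ, (Rfam s).f k ∈ D.sep e'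
  hbranch : ∀ s ∈ D.sep e, ∀ k : ℕ, (Rfam s).f k ∈ D.sep e' →
    (Rfam s).f k ∈ Wcopy.H.verts ∧ (↑(Wcopy.φ ((Rfam s).f k)) : V) = s

/-- The bough `B(e)` is self-similar towards the end `ω` of `G`. -/
def BoughSelfSimilar {G : SimpleGraph V} {T : Type} (D : RootedTreeDecomp G T) (e : D.Edge)
    (ω : Set (Ray G)) : Prop :=
  ∃ Rfam : V → Ray G,
    (∀ s ∈ D.sep e, (Rfam s).f 0 = s ∧ Rfam s ∈ ω) ∧
    (∀ s ∈ D.sep e, ∀ s' ∈ D.sep e, s ≠ s' → Disjoint (Rfam s).verts (Rfam s').verts) ∧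
    ∀ n : ℕ, Nonempty (SelfSimilarityWitness D e Rfam n)

/-- An extensive tree-decomposition: the tree is locally finite, every part is
finite, every vertex lies in finitely many parts, and every bough is
self-similar towards some end of `G`. -/
def Extensive {G : SimpleGraph V} {T : Type} (D : RootedTreeDecomp G T) : Prop :=
  (∀ t : T, (D.tree.neighborSet t).Finite) ∧
  (∀ t : T, (D.part t).Finite) ∧
  (∀ v : V, {t : T | v ∈ D.part t}.Finite) ∧
  ∀ e : D.Edge, ∃ ω : Set (Ray G), IsEnd G ω ∧ BoughSelfSimilar D e ω

/-- A lean tree-decomposition. -/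
def LeanTD {G : SimpleGraph V} {T : Type} (D : RootedTreeDecomp G T) : Prop :=
  ∀ (k : ℕ) (t₁ t₂ : T) (X₁ X₂ : Set V), X₁ ⊆ D.part t₁ → X₂ ⊆ D.part t₂ →
    (k : ℕ∞) ≤ X₁.encard → (k : ℕ∞) ≤ X₂.encard →
    (∃ P : Fin k → PathBetween G X₁ X₂, ∀ i j, i ≠ j → Disjoint (P i).verts (P j).verts) ∨
    ∃ t : T, (∀ p : D.tree.Walk t₁ t₂, p.IsPath → t ∈ p.support) ∧ (D.part t).encard < (k : ℕ∞)

/-- The ray `0 – 1 – 2 – ⋯` as a graph on `ℕ`. -/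
def pathGraphN : SimpleGraph ℕ where
  Adj a b := a + 1 = b ∨ b + 1 = a
  symm := ⟨fun _ _ h => h.symm⟩
  loopless := ⟨fun a h => by rcases h with h | h <;> omega⟩

/-! ### Pullbacks and end components -/

/-- `S` is a pullback of the ray `R` of `G` to the inflated copy `Hc`: `S`
traverses the branch sets of the vertices of `R` consecutively and in order. -/
def IsPullbackRay {G : SimpleGraph V} {Γ : SimpleGraph W} (Hc : InflatedCopy G Γ)
    (R : Ray G) (S : Ray Γ) : Prop :=
  ∃ g : ℕ → ℕ, Monotone g ∧ g 0 = 0 ∧ (∀ m : ℕ, ∃ k, m ≤ g k) ∧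
    (∀ k, g (k + 1) ≤ g k + 1) ∧
    ∀ k, S.f k ∈ Hc.H.verts ∧ Hc.φ (S.f k) = R.f (g k)

/-- The component `C(X, δ)` of `Γ − X` in which every ray of `δ` has a tail. -/
def endComp (Γ : SimpleGraph W) (X : Set W) (δ : Set (Ray Γ)) : Set W :=
  {w | ∃ R ∈ δ, ∃ k : ℕ, (∀ j : ℕ, k ≤ j → R.f j ∉ X) ∧ ReachAvoid Γ X w (R.f k)}


/-! ### Auxiliary lemmas for separation asymmetry -/

section Aux

variable {Γ : SimpleGraph W}

lemma Ray.tail_isTailOf (A : Ray Γ) (a : ℕ) : (A.tail a).IsTailOf A :=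
  ⟨a, fun _ => rfl⟩

lemma Ray.tail_verts_subset (A : Ray Γ) (a : ℕ) : (A.tail a).verts ⊆ A.verts := by
  rintro v ⟨n, rfl⟩; exact ⟨n + a, rfl⟩

lemma Ray.tail_verts_mono (A : Ray Γ) {a a' : ℕ} (h : a ≤ a') :
    (A.tail a').verts ⊆ (A.tail a).verts := by
  rintro v ⟨n, rfl⟩
  refine ⟨n + (a' - a), ?_⟩
  show A.f (n + (a' - a) + a) = A.f (n + a')
  congr 1; omega

lemma Ray.verts_split (A : Ray Γ) (a : ℕ) {v : W} (hv : v ∈ A.verts) :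
    v ∈ (A.tail a).verts ∨ ∃ n < a, A.f n = v := by
  obtain ⟨n, rfl⟩ := hv
  rcases lt_or_ge n a with h | h
  · exact Or.inr ⟨n, h, rfl⟩
  · refine Or.inl ⟨n - a, ?_⟩
    show A.f (n - a + a) = A.f n
    congr 1; omega

/-- A ray eventually avoids any finite set. -/
lemma Ray.tail_avoid (A : Ray Γ) {F : Set W} (hF : F.Finite) :
    ∃ a : ℕ, ∀ n : ℕ, a ≤ n → A.f n ∉ F := by
  have h1 : (A.f ⁻¹' F).Finite := Set.Finite.preimage (A.inj.injOn) hF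
  obtain ⟨a, ha⟩ := h1.bddAbove
  exact ⟨a + 1, fun n hn hmem => by have := ha hmem; omega⟩

/-- Ray equivalence avoiding a set is symmetric. -/
lemma RayEquivAvoiding.symm' {X : Set W} {A B : Ray Γ}
    (h : RayEquivAvoiding Γ X A B) : RayEquivAvoiding Γ X B A := by
  obtain ⟨P, hav, hd⟩ := h
  refine ⟨fun n => ⟨(P n).last, (P n).first, (P n).walk.reverse, (P n).isPath.reverse,
    (P n).last_mem, (P n).first_mem⟩, ?_, ?_⟩
  · intro n v hv
    apply hav n v
    simpa [PathBetween.verts, SimpleGraph.Walk.support_reverse] using hv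
  · intro m n hmn
    have := hd m n hmn
    have hh : ∀ (Q : PathBetween Γ A.verts B.verts),
        ({v | v ∈ Q.walk.reverse.support} : Set W) = Q.verts := by
      intro Q; ext v; simp [PathBetween.verts, SimpleGraph.Walk.support_reverse]
    simpa [PathBetween.verts, hh] using this

/-- A prefix of a path stopping at its first vertex in `A`. -/
lemma exists_prefix (A : Set W) {u v : W} (w : Γ.Walk u v) :
    w.IsPath → v ∈ A →
    ∃ x, x ∈ A ∧ ∃ w₁ : Γ.Walk u x, w₁.IsPath ∧
      (∀ y ∈ w₁.support, y ∈ w.support) ∧ (∀ y ∈ w₁.support, y ∈ A → y = x) := by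
  induction w with
  | nil =>
    intro _ hv
    exact ⟨_, hv, SimpleGraph.Walk.nil, by simp, by simp, by simp⟩
  | @cons x y z h q ih =>
    intro hw hv
    by_cases hx : x ∈ A
    · refine ⟨x, hx, SimpleGraph.Walk.nil, by simp, ?_, by simp⟩
      intro s hs; simp at hs; subst hs; simp
    · obtain ⟨hq, hxq⟩ := (SimpleGraph.Walk.cons_isPath_iff h q).mp hw
      obtain ⟨x', hx', w₁, hw₁, hsub, honly⟩ := ih hq hv
      refine ⟨x', hx', SimpleGraph.Walk.cons h w₁, ?_, ?_, ?_⟩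
      · exact (SimpleGraph.Walk.cons_isPath_iff h w₁).mpr ⟨hw₁, fun hc => hxq (hsub x hc)⟩
      · intro s hs
        rw [SimpleGraph.Walk.support_cons] at hs ⊢
        rcases List.mem_cons.mp hs with hs | hs
        · exact List.mem_cons.mpr (Or.inl hs)
        · exact List.mem_cons.mpr (Or.inr (hsub s hs))
      · intro s hs hsA
        rw [SimpleGraph.Walk.support_cons] at hs
        rcases List.mem_cons.mp hs with hs | hs
        · exact absurd (hs ▸ hsA) hx
        · exact honly s hs hsA

/-- From disjoint paths, infinitely many avoid a finite set. -/
lemma infinite_good {A B : Set W} (P : ℕ → PathBetween Γ A B)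
    (hd : ∀ m n : ℕ, m ≠ n → Disjoint (P m).verts (P n).verts)
    {F : Set W} (hF : F.Finite) :
    {n : ℕ | ∀ v ∈ (P n).verts, v ∉ F}.Infinite := by
  have hbad : {n : ℕ | ∃ v ∈ F, v ∈ (P n).verts}.Finite := by
    have hsub : {n : ℕ | ∃ v ∈ F, v ∈ (P n).verts} ⊆ ⋃ v ∈ F, {n | v ∈ (P n).verts} := by
      rintro n ⟨v, hvF, hvP⟩
      exact Set.mem_biUnion hvF hvP
    refine Set.Finite.subset (Set.Finite.biUnion hF ?_) hsub
    intro v _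
    apply Set.Subsingleton.finite
    intro m hm n hn
    by_contra hmn
    exact Set.disjoint_left.mp (hd m n hmn) hm hn
  have : {n : ℕ | ∃ v ∈ F, v ∈ (P n).verts}ᶜ.Infinite := hbad.infinite_compl
  refine this.mono ?_
  intro n hn
  intro v hv hvF
  exact hn ⟨v, hvF, hv⟩

/-- KEY: given infinitely many disjoint `A`–`B` paths and pairwise "eventually
disjoint" rays `A`, `B`, `C`, either some tails of `A`,`B` are equivalent
avoiding `C`, or some tails of `A`,`C` are equivalent avoiding `B`. -/
lemma key (A B C : Ray Γ) (hAB : RayEquiv Γ A B) (a b c : ℕ)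
    (hAB' : Disjoint (A.tail a).verts B.verts)
    (hAC' : Disjoint (A.tail a).verts C.verts)
    (hBC' : Disjoint (B.tail b).verts C.verts)
    (hCB' : Disjoint (C.tail c).verts B.verts) :
    (∃ A' B' : Ray Γ, A'.IsTailOf A ∧ B'.IsTailOf B ∧ Disjoint A'.verts C.verts ∧
      Disjoint B'.verts C.verts ∧ RayEquivAvoiding Γ C.verts A' B') ∨
    (∃ A' C' : Ray Γ, A'.IsTailOf A ∧ C'.IsTailOf C ∧ Disjoint A'.verts B.verts ∧
      Disjoint C'.verts B.verts ∧ RayEquivAvoiding Γ B.verts A' C') := by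
  classical
  obtain ⟨P, -, hd⟩ := hAB
  set F : Set W := (A.f '' Set.Iio a) ∪ (B.f '' Set.Iio b) ∪ (C.f '' Set.Iio c) with hFdef
  have hF : F.Finite :=
    (((Set.finite_Iio a).image A.f).union ((Set.finite_Iio b).image B.f)).union
      ((Set.finite_Iio c).image C.f)
  have hgood := infinite_good P hd hF
  set e : ℕ ↪ {n : ℕ | ∀ v ∈ (P n).verts, v ∉ F} := hgood.natEmbedding with hedef
  -- membership facts about each selected path
  have hAvoid : ∀ n : ℕ, ∀ v ∈ (P (e n : ℕ)).verts, v ∉ F := fun n => (e n).2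
  have hfirst : ∀ n : ℕ, (P (e n : ℕ)).first ∈ (A.tail a).verts := by
    intro n
    rcases A.verts_split a (P (e n : ℕ)).first_mem with h | ⟨k, hk, hkv⟩
    · exact h
    · exfalso
      refine hAvoid n _ ?_ (Or.inl (Or.inl ⟨k, hk, hkv⟩))
      exact SimpleGraph.Walk.start_mem_support _
  have hlast : ∀ n : ℕ, (P (e n : ℕ)).last ∈ (B.tail b).verts := by
    intro n
    rcases B.verts_split b (P (e n : ℕ)).last_mem with h | ⟨k, hk, hkv⟩
    · exact h
    · exfalso
      refine hAvoid n _ ?_ (Or.inl (Or.inr ⟨k, hk, hkv⟩))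
      exact SimpleGraph.Walk.end_mem_support _
  set Tgt : Set W := (B.tail b).verts ∪ (C.tail c).verts with hTgt
  have hprefix : ∀ n : ℕ, ∃ x, x ∈ Tgt ∧
      ∃ w₁ : Γ.Walk (P (e n : ℕ)).first x, w₁.IsPath ∧
      (∀ y ∈ w₁.support, y ∈ (P (e n : ℕ)).walk.support) ∧
      (∀ y ∈ w₁.support, y ∈ Tgt → y = x) := by
    intro n
    exact exists_prefix Tgt (P (e n : ℕ)).walk (P (e n : ℕ)).isPath (Or.inl (hlast n))
  choose x hxT w₁ hw₁ hsub honly using hprefix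
  have hBCd : Disjoint (B.tail b).verts (C.tail c).verts :=
    Set.disjoint_of_subset_right (C.tail_verts_subset c) hBC'
  -- case split on where the truncation ends
  have hcases : {n : ℕ | x n ∈ (B.tail b).verts}.Infinite ∨
      {n : ℕ | x n ∈ (B.tail b).verts}ᶜ.Infinite := by
    rcases Set.finite_or_infinite {n : ℕ | x n ∈ (B.tail b).verts} with h | h
    · exact Or.inr h.infinite_compl
    · exact Or.inl h
  -- generic facts
  have hsupp_sub : ∀ n : ℕ, ∀ v ∈ (w₁ n).support, v ∉ F := by
    intro n v hv
    exact hAvoid n v (hsub n v hv)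
  rcases hcases with hinf | hinf
  · -- endpoints in the tail of B : tails of A, B are equivalent avoiding C
    left
    set g : ℕ ↪ {n : ℕ | x n ∈ (B.tail b).verts} := hinf.natEmbedding with hgdef
    refine ⟨A.tail a, B.tail b, A.tail_isTailOf a, B.tail_isTailOf b, hAC', hBC', ?_⟩
    refine ⟨fun m => ⟨(P (e (g m : ℕ) : ℕ)).first, x (g m : ℕ), w₁ (g m : ℕ),
      hw₁ (g m : ℕ), hfirst (g m : ℕ), (g m).2⟩, ?_, ?_⟩
    · intro m v hv hvC
      have hvs : v ∈ (w₁ (g m : ℕ)).support := hv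
      rcases C.verts_split c hvC with h | ⟨k, hk, hkv⟩
      · have := honly (g m : ℕ) v hvs (Or.inr h)
        subst this
        exact Set.disjoint_left.mp hBCd (g m).2 h
      · exact hsupp_sub (g m : ℕ) v hvs (Or.inr ⟨k, hk, hkv⟩)
    · intro m n hmn
      have hne : (e (g m : ℕ) : ℕ) ≠ (e (g n : ℕ) : ℕ) := by
        intro hcon
        exact hmn (g.injective (Subtype.coe_injective (e.injective
          (Subtype.coe_injective hcon))))
      refine Set.disjoint_of_subset ?_ ?_ (hd _ _ hne) <;>
        · intro v hv
          exact hsub _ v hv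
  · -- endpoints in the tail of C : tails of A, C are equivalent avoiding B
    right
    set g := hinf.natEmbedding with hgdef
    have hxC : ∀ m : ℕ, x (g m : ℕ) ∈ (C.tail c).verts := by
      intro m
      rcases hxT (g m : ℕ) with h | h
      · exact absurd h (g m).2
      · exact h
    refine ⟨A.tail a, C.tail c, A.tail_isTailOf a, C.tail_isTailOf c, hAB', hCB', ?_⟩
    refine ⟨fun m => ⟨(P (e (g m : ℕ) : ℕ)).first, x (g m : ℕ), w₁ (g m : ℕ),
      hw₁ (g m : ℕ), hfirst (g m : ℕ), hxC m⟩, ?_, ?_⟩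
    · intro m v hv hvB
      have hvs : v ∈ (w₁ (g m : ℕ)).support := hv
      rcases B.verts_split b hvB with h | ⟨k, hk, hkv⟩
      · have := honly (g m : ℕ) v hvs (Or.inl h)
        subst this
        exact Set.disjoint_left.mp hBCd h (hxC m)
      · exact hsupp_sub (g m : ℕ) v hvs (Or.inl (Or.inr ⟨k, hk, hkv⟩))
    · intro m n hmn
      have hne : (e (g m : ℕ) : ℕ) ≠ (e (g n : ℕ) : ℕ) := by
        intro hcon
        exact hmn (g.injective (Subtype.coe_injective (e.injective
          (Subtype.coe_injective hcon))))
      refine Set.disjoint_of_subset ?_ ?_ (hd _ _ hne) <;>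
        · intro v hv
          exact hsub _ v hv

end Aux

/-- If `S` separates `R` from `T'`, then `T'` does not separate `R`
from `S` and `R` does not separate `S` from `T'`. -/
theorem separation_asymmetry
    (Γ : SimpleGraph W) (ε : Set (Ray Γ)) (hε : IsEnd Γ ε)
    (R S T' : Ray Γ) (hR : R ∈ ε) (hS : S ∈ ε) (hT : T' ∈ ε)
    (htails : ∃ a b c : ℕ,
      Disjoint (R.tail a).verts (S.tail b).verts ∧
      Disjoint (R.tail a).verts (T'.tail c).verts ∧
      Disjoint (S.tail b).verts (T'.tail c).verts)
    (hsep : SeparatesRay Γ S R T') :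
    ¬ SeparatesRay Γ T' R S ∧ ¬ SeparatesRay Γ R S T' := by
  obtain ⟨a, b, c, hRS, hRT, hST⟩ := htails
  -- pick further tails of `R`, `S`, `T'` that are disjoint from the other two FULL rays
  obtain ⟨a₁, ha₁⟩ := R.tail_avoid
    (((Set.finite_Iio b).image S.f).union ((Set.finite_Iio c).image T'.f))
  obtain ⟨b₁, hb₁⟩ := S.tail_avoid
    (((Set.finite_Iio a).image R.f).union ((Set.finite_Iio c).image T'.f))
  obtain ⟨c₁, hc₁⟩ := T'.tail_avoid
    (((Set.finite_Iio a).image R.f).union ((Set.finite_Iio b).image S.f))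
  set a₂ := max a a₁ with ha₂
  set b₂ := max b b₁ with hb₂
  set c₂ := max c c₁ with hc₂
  have hR_S : Disjoint (R.tail a₂).verts S.verts := by
    rw [Set.disjoint_left]
    rintro v ⟨n, rfl⟩ hvS
    rcases S.verts_split b hvS with h | ⟨k, hk, hkv⟩
    · exact Set.disjoint_left.mp hRS (R.tail_verts_mono (le_max_left a a₁) ⟨n, rfl⟩) h
    · exact ha₁ (n + a₂) (by omega) (Set.mem_union_left _ ⟨k, hk, hkv⟩)
  have hR_T : Disjoint (R.tail a₂).verts T'.verts := by
    rw [Set.disjoint_left]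
    rintro v ⟨n, rfl⟩ hvT
    rcases T'.verts_split c hvT with h | ⟨k, hk, hkv⟩
    · exact Set.disjoint_left.mp hRT (R.tail_verts_mono (le_max_left a a₁) ⟨n, rfl⟩) h
    · exact ha₁ (n + a₂) (by omega) (Set.mem_union_right _ ⟨k, hk, hkv⟩)
  have hS_R : Disjoint (S.tail b₂).verts R.verts := by
    rw [Set.disjoint_left]
    rintro v ⟨n, rfl⟩ hvR
    rcases R.verts_split a hvR with h | ⟨k, hk, hkv⟩
    · exact Set.disjoint_left.mp hRS.symm (S.tail_verts_mono (le_max_left b b₁) ⟨n, rfl⟩) h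
    · exact hb₁ (n + b₂) (by omega) (Set.mem_union_left _ ⟨k, hk, hkv⟩)
  have hS_T : Disjoint (S.tail b₂).verts T'.verts := by
    rw [Set.disjoint_left]
    rintro v ⟨n, rfl⟩ hvT
    rcases T'.verts_split c hvT with h | ⟨k, hk, hkv⟩
    · exact Set.disjoint_left.mp hST (S.tail_verts_mono (le_max_left b b₁) ⟨n, rfl⟩) h
    · exact hb₁ (n + b₂) (by omega) (Set.mem_union_right _ ⟨k, hk, hkv⟩)
  have hT_R : Disjoint (T'.tail c₂).verts R.verts := by
    rw [Set.disjoint_left]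
    rintro v ⟨n, rfl⟩ hvR
    rcases R.verts_split a hvR with h | ⟨k, hk, hkv⟩
    · exact Set.disjoint_left.mp hRT.symm (T'.tail_verts_mono (le_max_left c c₁) ⟨n, rfl⟩) h
    · exact hc₁ (n + c₂) (by omega) (Set.mem_union_left _ ⟨k, hk, hkv⟩)
  have hT_S : Disjoint (T'.tail c₂).verts S.verts := by
    rw [Set.disjoint_left]
    rintro v ⟨n, rfl⟩ hvS
    rcases S.verts_split b hvS with h | ⟨k, hk, hkv⟩
    · exact Set.disjoint_left.mp hST.symm (T'.tail_verts_mono (le_max_left c c₁) ⟨n, rfl⟩) h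
    · exact hc₁ (n + c₂) (by omega) (Set.mem_union_right _ ⟨k, hk, hkv⟩)
  constructor
  · intro hsep2
    have hEquiv : RayEquiv Γ R S := (hε.2 R hR S).mp hS
    rcases key R S T' hEquiv a₂ b₂ c₂ hR_S hR_T hS_T hT_S with
      ⟨R', S', h1, h2, h3, h4, h5⟩ | ⟨R', T₁, h1, h2, h3, h4, h5⟩
    · exact hsep2 R' S' h1 h2 h3 h4 h5
    · exact hsep R' T₁ h1 h2 h3 h4 h5
  · intro hsep2
    have hEquiv : RayEquiv Γ T' S := (hε.2 T' hT S).mp hS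
    rcases key T' S R hEquiv c₂ b₂ a₂ hT_S hT_R hS_R hR_S with
      ⟨T₁, S₁, h1, h2, h3, h4, h5⟩ | ⟨T₁, R₁, h1, h2, h3, h4, h5⟩
    · exact hsep2 S₁ T₁ h2 h1 h4 h3 h5.symm'
    · exact hsep R₁ T₁ h2 h1 h4 h3 h5.symm'

end Ubiquity
end

section
/- Let Γ be a graph, ε a half-grid-like end of Γ, and let R and S be disjoint core rays of ε. Suppose ε splits in Γ − V(S) into the two ends ε′_S and ε″_S, and in Γ − V(R) into the two ends ε′_R and ε″_R. If R belongs to ε′_S and S belongs to ε′_R, then ε″_S is a sub-end of ε′_R and ε″_R is a sub-end of ε′_S. -/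
set_option autoImplicit false

namespace Ubiquity

variable {V W T : Type}

/-! ### Auxiliary lemmas for Statement 13 -/

open SimpleGraph in
lemma aux_firstHit {Γ : SimpleGraph W} {SB : Set W} {u v : W} (p : Γ.Walk u v) :
    v ∈ SB →
      ∃ (y : W) (q : Γ.Walk u y), y ∈ SB ∧ q.support.Sublist p.support ∧
        ∀ z ∈ q.support, z ∈ SB → z = y := by
  induction p with
  | nil =>
    intro hv
    exact ⟨_, Walk.nil, hv, by simp, by simp⟩
  | @cons a b c h p ih =>
    intro hv
    by_cases ha : a ∈ SB
    · refine ⟨a, Walk.nil, ha, ?_, ?_⟩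
      · rw [Walk.support_nil, Walk.support_cons]
        exact List.singleton_sublist.mpr List.mem_cons_self
      · intro z hz _
        rw [Walk.support_nil, List.mem_singleton] at hz
        exact hz
    · obtain ⟨y, q, hy, hsub, hcond⟩ := ih hv
      refine ⟨y, Walk.cons h q, hy, ?_, ?_⟩
      · rw [Walk.support_cons, Walk.support_cons]
        exact hsub.cons₂ a
      · intro z hz hzS
        rw [Walk.support_cons] at hz
        rcases List.mem_cons.mp hz with rfl | hz'
        · exact absurd hzS ha
        · exact hcond z hz' hzS

open SimpleGraph in
lemma aux_segment {Γ : SimpleGraph W} {SA SB : Set W} (hdis : Disjoint SA SB)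
    {u v : W} (p : Γ.Walk u v) (hnd : p.support.Nodup) (hu : u ∈ SA) (hv : v ∈ SB) :
    ∃ (x y : W) (q : Γ.Walk x y), x ∈ SA ∧ y ∈ SB ∧ q.support.Nodup ∧
      (∀ z ∈ q.support, z ∈ p.support) ∧
      (∀ z ∈ q.support, z ∈ SA → z = x) ∧
      (∀ z ∈ q.support, z ∈ SB → z = y) := by
  obtain ⟨y, q₁, hy, hsub₁, hB₁⟩ := aux_firstHit p hv
  obtain ⟨x, q₂, hx, hsub₂, hA₂⟩ := aux_firstHit (SB := SA) q₁.reverse hu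
  have hmem₂ : ∀ z ∈ q₂.support, z ∈ q₁.support := by
    intro z hz
    have h := hsub₂.subset hz
    rwa [Walk.support_reverse, List.mem_reverse] at h
  have hnd₁ : q₁.support.Nodup := hnd.sublist hsub₁
  have hnd₂ : q₂.support.Nodup := by
    have h2 : q₁.reverse.support.Nodup := by
      rw [Walk.support_reverse]; exact List.nodup_reverse.mpr hnd₁
    exact h2.sublist hsub₂
  refine ⟨x, y, q₂.reverse, hx, hy, ?_, ?_, ?_, ?_⟩
  · rw [Walk.support_reverse]; exact List.nodup_reverse.mpr hnd₂
  · intro z hz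
    rw [Walk.support_reverse, List.mem_reverse] at hz
    exact hsub₁.subset (hmem₂ z hz)
  · intro z hz hzA
    rw [Walk.support_reverse, List.mem_reverse] at hz
    exact hA₂ z hz hzA
  · intro z hz hzB
    rw [Walk.support_reverse, List.mem_reverse] at hz
    exact hB₁ z (hmem₂ z hz) hzB

open SimpleGraph in
lemma aux_equiv_common {Γ : SimpleGraph W} (X : Set W) (Ra Tb : Ray Γ)
    (hinf : {n : ℕ | Tb.f n ∈ Ra.verts}.Infinite) (hX : ∀ n, Tb.f n ∉ X) :
    RayEquivAvoiding Γ X Ra Tb := by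
  let e := hinf.natEmbedding
  refine ⟨fun m => ⟨Tb.f (e m), Tb.f (e m), Walk.nil, Walk.IsPath.nil, (e m).2,
    ⟨(e m : ℕ), rfl⟩⟩, ?_, ?_⟩
  · intro n v hv
    have hv' : v = Tb.f (e n) :=
      List.mem_singleton.mp (show v ∈ [Tb.f (e n)] from hv)
    rw [hv']; exact hX _
  · intro m n hmn
    rw [Set.disjoint_left]
    intro v hv hv'
    have h1 : v = Tb.f (e m) :=
      List.mem_singleton.mp (show v ∈ [Tb.f (e m)] from hv)
    have h2 : v = Tb.f (e n) :=
      List.mem_singleton.mp (show v ∈ [Tb.f (e n)] from hv')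
    have h3 : (e m : ℕ) = (e n : ℕ) := Tb.inj (h1.symm.trans h2)
    exact hmn (e.injective (Subtype.ext h3))

lemma aux_equiv_weaken {Γ : SimpleGraph W} {X : Set W} {Ra Tb : Ray Γ}
    (h : RayEquivAvoiding Γ X Ra Tb) : RayEquiv Γ Ra Tb := by
  obtain ⟨P, -, hd⟩ := h
  exact ⟨P, fun n v _ => Set.notMem_empty v, hd⟩

lemma aux_ends_eq {Γ : SimpleGraph W} {X : Set W} {δ δ' : Set (Ray Γ)}
    (hδ : IsEndAvoiding Γ X δ) (hδ' : IsEndAvoiding Γ X δ')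
    {Tb : Ray Γ} (h1 : Tb ∈ δ) (h2 : Tb ∈ δ') : δ = δ' := by
  ext U
  constructor
  · intro hU
    have hUd : Disjoint U.verts X := hδ.2.1 U hU
    exact (hδ'.2.2 Tb h2 U hUd).mpr ((hδ.2.2 Tb h1 U hUd).mp hU)
  · intro hU
    have hUd : Disjoint U.verts X := hδ'.2.1 U hU
    exact (hδ.2.2 Tb h1 U hUd).mpr ((hδ'.2.2 Tb h2 U hUd).mp hU)

open SimpleGraph in
lemma aux_key {Γ : SimpleGraph W} {nn : ℕ} (F : Fin nn → Ray Γ)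
    (hFdisj : ∀ i j : Fin nn, i ≠ j → Disjoint (F i).verts (F j).verts)
    (c : Fin nn) {A B : Set (Fin nn)}
    (hunion : A ∪ B = {i | i ≠ c}) (hAB : Disjoint A B)
    (hnocross : ∀ a ∈ A, ∀ b ∈ B, ¬ ReachAvoid (rayGraph Γ F) {c} a b)
    {a b : Fin nn} (ha : a ∈ A) (hb : b ∈ B) :
    ¬ RayEquivAvoiding Γ (F c).verts (F a) (F b) := by
  rintro ⟨P, havoid, hPdisj⟩
  classical
  set SA : Set W := {w | ∃ k ∈ A, w ∈ (F k).verts} with hSAdef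
  set SB : Set W := {w | ∃ k ∈ B, w ∈ (F k).verts} with hSBdef
  have hdis : Disjoint SA SB := by
    rw [Set.disjoint_left]
    rintro z ⟨k, hk, hz⟩ ⟨k', hk', hz'⟩
    have hne : k ≠ k' := fun h => Set.disjoint_left.mp hAB hk (h ▸ hk')
    exact Set.disjoint_left.mp (hFdisj k k' hne) hz hz'
  have H : ∀ m : ℕ, ∃ (aa bb : Fin nn) (x y : W) (q : Γ.Walk x y),
      aa ∈ A ∧ bb ∈ B ∧ x ∈ (F aa).verts ∧ y ∈ (F bb).verts ∧ q.support.Nodup ∧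
      (∀ z ∈ q.support, z ∈ (P m).walk.support) ∧
      (∀ z ∈ q.support, z ∈ SA → z = x) ∧ (∀ z ∈ q.support, z ∈ SB → z = y) := by
    intro m
    obtain ⟨x, y, q, hx, hy, hnd, hmem, hcA, hcB⟩ :=
      aux_segment hdis (P m).walk (P m).isPath.support_nodup
        (show (P m).first ∈ SA from ⟨a, ha, (P m).first_mem⟩)
        (show (P m).last ∈ SB from ⟨b, hb, (P m).last_mem⟩)
    obtain ⟨aa, haa, hxa⟩ := hx
    obtain ⟨bb, hbb, hyb⟩ := hy
    exact ⟨aa, bb, x, y, q, haa, hbb, hxa, hyb, hnd, hmem, hcA, hcB⟩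
  choose aa bb x y q haa hbb hx hy hnd hmem hcA hcB using H
  obtain ⟨⟨astar, bstar⟩, hfib⟩ := Finite.exists_infinite_fiber (fun m => (aa m, bb m))
  have hMinf : ((fun m => (aa m, bb m)) ⁻¹' {(astar, bstar)}).Infinite :=
    Set.infinite_coe_iff.mp hfib
  let e := hMinf.natEmbedding
  have heq : ∀ m : ℕ, aa (e m) = astar ∧ bb (e m) = bstar := by
    intro m
    have h := (e m).2
    simp only [Set.mem_preimage, Set.mem_singleton_iff, Prod.mk.injEq] at h
    exact h
  have haA : astar ∈ A := (heq 0).1 ▸ haa (e 0)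
  have hbB : bstar ∈ B := (heq 0).2 ▸ hbb (e 0)
  have hne : astar ≠ bstar := fun h => Set.disjoint_left.mp hAB haA (h ▸ hbB)
  have hlink : LinkedRays Γ F astar bstar := by
    refine ⟨fun m => ⟨x (e m), y (e m), q (e m),
      (Walk.isPath_def _).mpr (hnd (e m)),
      (congrArg (fun i => (F i).verts) (heq m).1 ▸ hx (e m)),
      (congrArg (fun i => (F i).verts) (heq m).2 ▸ hy (e m))⟩, ?_, ?_⟩
    · intro m m' hmm'
      have hee : ((e m : ℕ)) ≠ ((e m' : ℕ)) := fun h => hmm' (e.injective (Subtype.ext h))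
      have hd := hPdisj (e m) (e m') hee
      rw [Set.disjoint_left] at hd ⊢
      intro v hv hv'
      exact hd (hmem (e m) v hv) (hmem (e m') v hv')
    · intro m k hka hkb
      rw [Set.disjoint_left]
      intro v hv hvk
      by_cases hkc : k = c
      · exact havoid (e m) v (hmem (e m) v hv) (hkc ▸ hvk)
      · have hkAB : k ∈ A ∪ B := by rw [hunion]; exact hkc
        rcases hkAB with hkA | hkB
        · have hvx : v = x (e m) := hcA (e m) v hv ⟨k, hkA, hvk⟩
          have hmem' : v ∈ (F astar).verts := by
            rw [hvx]; exact congrArg (fun i => (F i).verts) (heq m).1 ▸ hx (e m)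
          exact Set.disjoint_left.mp (hFdisj k astar hka) hvk hmem'
        · have hvy : v = y (e m) := hcB (e m) v hv ⟨k, hkB, hvk⟩
          have hmem' : v ∈ (F bstar).verts := by
            rw [hvy]; exact congrArg (fun i => (F i).verts) (heq m).2 ▸ hy (e m)
          exact Set.disjoint_left.mp (hFdisj k bstar hkb) hvk hmem'
  have hadj : (rayGraph Γ F).Adj astar bstar := ⟨hne, Or.inl hlink⟩
  have hastar : astar ≠ c := by
    have h : astar ∈ A ∪ B := Set.mem_union_left _ haA
    rw [hunion] at h; exact h
  have hbstar : bstar ≠ c := by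
    have h : bstar ∈ A ∪ B := Set.mem_union_right _ hbB
    rw [hunion] at h; exact h
  refine hnocross astar haA bstar hbB ⟨Walk.cons hadj Walk.nil, ?_⟩
  intro z hz
  rw [Walk.support_cons, Walk.support_nil] at hz
  rcases List.mem_cons.mp hz with rfl | hz'
  · simpa using hastar
  · rw [List.mem_singleton] at hz'
    subst hz'
    simpa using hbstar

open SimpleGraph in
lemma aux_main {Γ : SimpleGraph W} {ε : Set (Ray Γ)} (hg : HalfGridLike Γ ε)
    (R S : Ray Γ) (hS : IsCoreRay hg S)
    (hdisj : Disjoint R.verts S.verts)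
    {εS' εS'' εR' εR'' : Set (Ray Γ)}
    (hsplitS : SplitsInto Γ ε S.verts εS' εS'')
    (hsplitR : SplitsInto Γ ε R.verts εR' εR'')
    (hRmem : R ∈ εS') (hSmem : S ∈ εR') :
    SubEnd Γ εS'' εR' := by
  classical
  obtain ⟨hendS', hendS'', hneS, hunionS⟩ := hsplitS
  obtain ⟨hendR', hendR'', hneR, hunionR⟩ := hsplitR
  obtain ⟨hSε, nn, F, c, ⟨hFε, hFdisj⟩, hFc, A, B, hA, hB, hABd, hABu,
    -, -, hnocross, -, -⟩ := hS
  obtain ⟨a, haA⟩ := hA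
  obtain ⟨b, hbB⟩ := hB
  have hac : a ≠ c := by
    have h : a ∈ A ∪ B := Set.mem_union_left _ haA
    rw [hABu] at h; exact h
  have hbc : b ≠ c := by
    have h : b ∈ A ∪ B := Set.mem_union_right _ hbB
    rw [hABu] at h; exact h
  have hFaS : Disjoint (F a).verts S.verts := hFc ▸ hFdisj a c hac
  have hFbS : Disjoint (F b).verts S.verts := hFc ▸ hFdisj b c hbc
  have hnk : ¬ RayEquivAvoiding Γ S.verts (F a) (F b) := by
    have h := aux_key F hFdisj c hABu hABd hnocross haA hbB
    rwa [hFc] at h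
  have hUex : ∃ U, U ∈ ε ∧ U ∈ εS'' := by
    rcases hunionS (F a) (hFε a) hFaS with h | h
    · rcases hunionS (F b) (hFε b) hFbS with h' | h'
      · exact absurd ((hendS'.2.2 (F a) h (F b) hFbS).mp h') hnk
      · exact ⟨F b, hFε b, h'⟩
    · exact ⟨F a, hFε a, h⟩
  obtain ⟨U, hUε, hUS⟩ := hUex
  intro Tb hT
  have hTdS : Disjoint Tb.verts S.verts := hendS''.2.1 Tb hT
  have hTε : Tb ∈ ε :=
    (hg.isEnd.2 U hUε Tb).mpr (aux_equiv_weaken ((hendS''.2.2 U hUS Tb hTdS).mp hT))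
  have hfin : {m : ℕ | Tb.f m ∈ R.verts}.Finite := by
    by_contra hinf
    have heqv : RayEquivAvoiding Γ S.verts R Tb :=
      aux_equiv_common S.verts R Tb hinf
        (fun m => Set.disjoint_left.mp hTdS ⟨m, rfl⟩)
    have hmem : Tb ∈ εS' := (hendS'.2.2 R hRmem Tb hTdS).mpr heqv
    exact hneS (aux_ends_eq hendS' hendS'' hmem hT)
  obtain ⟨k, hk⟩ := hfin.bddAbove
  set Tb' := Tb.tail (k + 1) with hTb'def
  have hT'R : Disjoint Tb'.verts R.verts := by
    rw [Set.disjoint_left]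
    rintro v ⟨m, rfl⟩ hvR
    have hmem : m + (k + 1) ∈ {m : ℕ | Tb.f m ∈ R.verts} := hvR
    have := hk hmem
    omega
  have hT'T : Tb'.verts ⊆ Tb.verts := by
    rintro v ⟨m, rfl⟩; exact ⟨m + (k + 1), rfl⟩
  have hT'S : Disjoint Tb'.verts S.verts := hTdS.mono_left hT'T
  have hcommon : {m : ℕ | Tb'.f m ∈ Tb.verts}.Infinite := by
    have h : {m : ℕ | Tb'.f m ∈ Tb.verts} = Set.univ :=
      Set.eq_univ_of_forall (fun m => ⟨m + (k + 1), rfl⟩)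
    rw [h]; exact Set.infinite_univ
  have hT'S'' : Tb' ∈ εS'' :=
    (hendS''.2.2 Tb hT Tb' hT'S).mpr
      (aux_equiv_common S.verts Tb Tb' hcommon
        (fun m => Set.disjoint_left.mp hT'S ⟨m, rfl⟩))
  have hT'ε : Tb' ∈ ε :=
    (hg.isEnd.2 Tb hTε Tb').mpr
      (aux_equiv_common ∅ Tb Tb' hcommon (fun m => Set.notMem_empty _))
  have hES : RayEquiv Γ Tb' S := (hg.isEnd.2 Tb' hT'ε S).mp hSε
  obtain ⟨P, -, hPd⟩ := hES
  have hdAB : Disjoint Tb'.verts (R.verts ∪ S.verts) :=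
    Set.disjoint_union_right.mpr ⟨hT'R, hT'S⟩
  have H : ∀ m : ℕ, ∃ (x y : W) (q : Γ.Walk x y),
      x ∈ Tb'.verts ∧ y ∈ R.verts ∪ S.verts ∧ q.support.Nodup ∧
      (∀ z ∈ q.support, z ∈ (P m).walk.support) ∧
      (∀ z ∈ q.support, z ∈ R.verts ∪ S.verts → z = y) := by
    intro m
    obtain ⟨x, y, q, hx, hy, hnd, hmem, -, hcB⟩ :=
      aux_segment hdAB (P m).walk (P m).isPath.support_nodup (P m).first_mem
        (Set.mem_union_right _ (P m).last_mem)
    exact ⟨x, y, q, hx, hy, hnd, hmem, hcB⟩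
  choose x y q hx hy hnd hmem hcB using H
  by_cases hSinf : {m : ℕ | y m ∈ S.verts}.Infinite
  · let e := hSinf.natEmbedding
    have heqv : RayEquivAvoiding Γ R.verts S Tb' := by
      refine ⟨fun m => ⟨y (e m), x (e m), (q (e m)).reverse,
        ((Walk.isPath_def _).mpr (hnd (e m))).reverse, (e m).2, hx (e m)⟩, ?_, ?_⟩
      · intro m v hv hvR
        have hv' : v ∈ (q (e m)).support := by
          have h : v ∈ (q (e m)).reverse.support := hv
          rwa [Walk.support_reverse, List.mem_reverse] at h
        have hvy : v = y (e m) := hcB (e m) v hv' (Or.inl hvR)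
        exact Set.disjoint_left.mp hdisj hvR (by rw [hvy]; exact (e m).2)
      · intro m m' hmm'
        have hee : ((e m : ℕ)) ≠ ((e m' : ℕ)) := fun h => hmm' (e.injective (Subtype.ext h))
        have hd := hPd (e m) (e m') hee
        rw [Set.disjoint_left] at hd ⊢
        intro v hv hv'
        have h1 : v ∈ (q (e m)).support := by
          have h : v ∈ (q (e m)).reverse.support := hv
          rwa [Walk.support_reverse, List.mem_reverse] at h
        have h2 : v ∈ (q (e m')).support := by
          have h : v ∈ (q (e m')).reverse.support := hv'
          rwa [Walk.support_reverse, List.mem_reverse] at h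
        exact hd (hmem (e m) v h1) (hmem (e m') v h2)
    have hfinal : Tb' ∈ εR' := (hendR'.2.2 S hSmem Tb' hT'R).mpr heqv
    exact ⟨Tb', ⟨k + 1, fun n => rfl⟩, hfinal⟩
  · have hRinf : {m : ℕ | y m ∈ R.verts}.Infinite := by
      have hfinS : {m : ℕ | y m ∈ S.verts}.Finite := Set.not_infinite.mp hSinf
      refine Set.Infinite.mono ?_ hfinS.infinite_compl
      intro m hm
      rcases hy m with h | h
      · exact h
      · exact absurd h hm
    let e := hRinf.natEmbedding
    have heqv : RayEquivAvoiding Γ S.verts R Tb' := by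
      refine ⟨fun m => ⟨y (e m), x (e m), (q (e m)).reverse,
        ((Walk.isPath_def _).mpr (hnd (e m))).reverse, (e m).2, hx (e m)⟩, ?_, ?_⟩
      · intro m v hv hvS
        have hv' : v ∈ (q (e m)).support := by
          have h : v ∈ (q (e m)).reverse.support := hv
          rwa [Walk.support_reverse, List.mem_reverse] at h
        have hvy : v = y (e m) := hcB (e m) v hv' (Or.inr hvS)
        exact Set.disjoint_left.mp hdisj (by rw [hvy]; exact (e m).2) hvS
      · intro m m' hmm'
        have hee : ((e m : ℕ)) ≠ ((e m' : ℕ)) := fun h => hmm' (e.injective (Subtype.ext h))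
        have hd := hPd (e m) (e m') hee
        rw [Set.disjoint_left] at hd ⊢
        intro v hv hv'
        have h1 : v ∈ (q (e m)).support := by
          have h : v ∈ (q (e m)).reverse.support := hv
          rwa [Walk.support_reverse, List.mem_reverse] at h
        have h2 : v ∈ (q (e m')).support := by
          have h : v ∈ (q (e m')).reverse.support := hv'
          rwa [Walk.support_reverse, List.mem_reverse] at h
        exact hd (hmem (e m) v h1) (hmem (e m') v h2)
    have hmemS' : Tb' ∈ εS' := (hendS'.2.2 R hRmem Tb' hT'S).mpr heqv
    exact absurd (aux_ends_eq hendS' hendS'' hmemS' hT'S'') hneS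


/-- If `R ∈ ε′_S` and `S ∈ ε′_R`, then `ε″_S` is a sub-end of `ε′_R`
and `ε″_R` is a sub-end of `ε′_S`. -/
theorem subends_of_disjoint_core_rays
    (Γ : SimpleGraph W) (ε : Set (Ray Γ)) (hg : HalfGridLike Γ ε)
    (R S : Ray Γ) (hR : IsCoreRay hg R) (hS : IsCoreRay hg S)
    (hdisj : Disjoint R.verts S.verts)
    (εS' εS'' εR' εR'' : Set (Ray Γ))
    (hsplitS : SplitsInto Γ ε S.verts εS' εS'')
    (hsplitR : SplitsInto Γ ε R.verts εR' εR'')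
    (hRmem : R ∈ εS') (hSmem : S ∈ εR') :
    SubEnd Γ εS'' εR' ∧ SubEnd Γ εR'' εS' := by
  exact ⟨aux_main hg R S hS hdisj hsplitS hsplitR hRmem hSmem,
    aux_main hg S R hR hdisj.symm hsplitR hsplitS hSmem hRmem⟩

end Ubiquity
end
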